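/- With Φ defined as in the adversary potential recursion (Φ(h;())=h; Φ(h;(t,1)·S)=Φ(A(h);(t−1,1)·S); Φ(h;(t,κ)·S)=Φ(A(h);(A(h),κ−1)·(t−1,κ)·S) for κ>1; zero-count pairs may be dropped) and A = A_{s+1} from the Ackermann-like hierarchy, for every integer κ ≥ 1 and h ≥ 1: Φ(h; (1,κ)) ≤ A_{s+2κ−1}(h). -/

import Mathlib

/-- The Ackermann-like hierarchy: `Ack 0 N = N`, `Ack 1 N = 2^N`,
and `Ack (i+1) N` is the `(N+1)`-fold iterate of `Ack i` applied to `N`. -/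
def Ack : ℕ → ℕ → ℕ
  | 0, N => N
  | 1, N => 2 ^ N
  | (i+2), N => (Ack (i+1))^[N + 1] N

lemma le_iterate {f : ℕ → ℕ} (hi : ∀ n, n ≤ f n) : ∀ (d x : ℕ), x ≤ f^[d] x
  | 0, x => le_refl x
  | (d+1), x => by
      rw [Function.iterate_succ_apply']
      exact (le_iterate hi d x).trans (hi _)

lemma iter_mono_le {f : ℕ → ℕ} (hm : Monotone f) (hi : ∀ n, n ≤ f n)
    {j k a b : ℕ} (hjk : j ≤ k) (hab : a ≤ b) : f^[j] a ≤ f^[k] b := by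
  calc f^[j] a ≤ f^[j] b := hm.iterate j hab
    _ ≤ f^[k] b := by
        obtain ⟨d, rfl⟩ := Nat.exists_eq_add_of_le hjk
        rw [Nat.add_comm, Function.iterate_add_apply]
        exact le_iterate hi d _

lemma le_ack : ∀ i N, N ≤ Ack i N
  | 0, N => le_refl N
  | 1, N => (Nat.lt_two_pow_self (n := N)).le
  | (i+2), N => by
      show N ≤ (Ack (i+1))^[N+1] N
      exact le_iterate (le_ack (i+1)) (N+1) N

lemma ack_mono : ∀ i, Monotone (Ack i)
  | 0 => monotone_id
  | 1 => fun a b h => Nat.pow_le_pow_right (by norm_num) h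
  | (i+2) => fun a b h => by
      show (Ack (i+1))^[a+1] a ≤ (Ack (i+1))^[b+1] b
      exact iter_mono_le (ack_mono (i+1)) (le_ack (i+1)) (by omega) h

lemma ack_le_succ : ∀ i N, Ack i N ≤ Ack (i+1) N
  | 0, N => (Nat.lt_two_pow_self (n := N)).le
  | (i+1), N => by
      show Ack (i+1) N ≤ (Ack (i+1))^[N+1] N
      calc Ack (i+1) N = (Ack (i+1))^[1] N := rfl
        _ ≤ _ := iter_mono_le (ack_mono (i+1)) (le_ack (i+1)) (by omega) le_rfl

lemma ack_idx_mono {i j : ℕ} (h : i ≤ j) (N : ℕ) : Ack i N ≤ Ack j N := by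
  induction j with
  | zero => simp [Nat.le_zero.mp h]
  | succ j ih =>
    rcases Nat.lt_or_ge i (j+1) with h' | h'
    · exact (ih (by omega)).trans (ack_le_succ j N)
    · have : i = j + 1 := by omega
      simp [this]

lemma key {m s h : ℕ} (hm : s + 1 ≤ m) (hm2 : 2 ≤ m) (hh : 1 ≤ h) :
    (Ack m)^[Ack (s+1) h] (Ack (s+1) h) ≤ Ack (m+2) h := by
  obtain ⟨m', rfl⟩ : ∃ m', m = m' + 2 := ⟨m - 2, by omega⟩
  have h1 : Ack (s+1) h ≤ Ack (m'+2) h := ack_idx_mono hm h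
  have step1 : (Ack (m'+2))^[Ack (s+1) h] (Ack (s+1) h)
      ≤ (Ack (m'+2))^[Ack (m'+2) h] (Ack (m'+2) h) :=
    iter_mono_le (ack_mono _) (le_ack _) h1 h1
  have e1 : (Ack (m'+2))^[Ack (m'+2) h] (Ack (m'+2) h) = (Ack (m'+2))^[Ack (m'+2) h + 1] h := by
    rw [Function.iterate_succ_apply]
  have h2 : Ack (m'+2) h ≤ Ack (m'+3) h := ack_le_succ _ h
  have step2 : (Ack (m'+2))^[Ack (m'+2) h + 1] h
      ≤ (Ack (m'+2))^[Ack (m'+3) h + 1] (Ack (m'+3) h) :=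
    iter_mono_le (ack_mono _) (le_ack _) (by omega) (le_ack (m'+3) h)
  have e2 : (Ack (m'+2))^[Ack (m'+3) h + 1] (Ack (m'+3) h) = (Ack (m'+3))^[2] h := by
    have : (Ack (m'+3))^[2] h = Ack (m'+3) (Ack (m'+3) h) := by
      rw [Function.iterate_succ_apply', Function.iterate_one]
    rw [this]
    rfl
  have step3 : (Ack (m'+3))^[2] h ≤ (Ack (m'+3))^[h+1] h :=
    iter_mono_le (ack_mono _) (le_ack _) (by omega) le_rfl
  have e3 : (Ack (m'+3))^[h+1] h = Ack (m'+4) h := rfl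
  calc (Ack (m'+2))^[Ack (s+1) h] (Ack (s+1) h)
      ≤ (Ack (m'+2))^[Ack (m'+2) h] (Ack (m'+2) h) := step1
    _ = (Ack (m'+2))^[Ack (m'+2) h + 1] h := e1
    _ ≤ (Ack (m'+2))^[Ack (m'+3) h + 1] (Ack (m'+3) h) := step2
    _ = (Ack (m'+3))^[2] h := e2
    _ ≤ (Ack (m'+3))^[h+1] h := step3
    _ = Ack (m'+4) h := e3

/-- Explicit value of the potential recursion. -/
def F (A : ℕ → ℕ) : ℕ → ℕ → ℕ → ℕ
  | 0, _, h => h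
  | 1, t, h => A^[t] h
  | (κ+2), 0, h => h
  | (κ+2), (t+1), h => F A (κ+2) t (F A (κ+1) (A h) (A h))
termination_by κ t _ => (κ, t)

lemma F_le {A : ℕ → ℕ} (hA : ∀ n, n ≤ A n) : ∀ κ t h, h ≤ F A κ t h
  | 0, t, h => by simp [F]
  | 1, t, h => by simpa [F] using le_iterate hA t h
  | (κ+2), 0, h => by simp [F]
  | (κ+2), (t+1), h => by
      rw [show F A (κ+2) (t+1) h = F A (κ+2) t (F A (κ+1) (A h) (A h)) from by simp [F]]
      exact (hA h).trans ((F_le hA (κ+1) (A h) (A h)).trans (F_le hA (κ+2) t _))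
termination_by κ t _ => (κ, t)

lemma phiF (s : ℕ) (Φ : ℕ → List (ℕ × ℕ) → ℕ)
    (hzero : ∀ h κ S, Φ h ((0, κ) :: S) = Φ h S)
    (hone : ∀ h t S, Φ h ((t + 1, 1) :: S) = Φ (Ack (s + 1) h) ((t, 1) :: S))
    (hgen : ∀ h t κ S, 1 < κ →
      Φ h ((t + 1, κ) :: S) =
        Φ (Ack (s + 1) h) ((Ack (s + 1) h, κ - 1) :: (t, κ) :: S)) :
    ∀ κ t h S, Φ h ((t, κ + 1) :: S) = Φ (F (Ack (s + 1)) (κ + 1) t h) S := by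
  intro κ
  induction κ with
  | zero =>
    intro t
    induction t with
    | zero => intro h S; rw [hzero]; simp [F]
    | succ t ih =>
      intro h S
      rw [hone, ih]
      congr 1
      simp [F, Function.iterate_succ_apply]
  | succ κ ihκ =>
    intro t
    induction t with
    | zero => intro h S; rw [hzero]; simp [F]
    | succ t iht =>
      intro h S
      simp only [show κ + 1 + 1 = κ + 2 from rfl] at iht ⊢
      rw [hgen h t (κ+2) S (by omega)]
      simp only [show κ + 2 - 1 = κ + 1 from rfl]
      rw [ihκ (Ack (s+1) h) (Ack (s+1) h) ((t, κ+2) :: S), iht]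
      congr 1
      simp [F]

lemma F_bound (s : ℕ) (hs : 1 ≤ s) : ∀ κ t h, 1 ≤ h →
    F (Ack (s+1)) (κ+1) t h ≤ (Ack (s + 2*κ + 1))^[t] h
  | 0, t, h, _ => by simp [F]
  | (κ+1), 0, h, _ => by
      simp only [show κ + 1 + 1 = κ + 2 from rfl]
      simp [F]
  | (κ+1), (t+1), h, hh => by
      simp only [show κ + 1 + 1 = κ + 2 from rfl]
      have hA := le_ack (s+1)
      have hAh : 1 ≤ Ack (s+1) h := le_trans hh (hA h)
      have hb1 := F_bound s hs κ (Ack (s+1) h) (Ack (s+1) h) hAh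
      have hkey : (Ack (s+2*κ+1))^[Ack (s+1) h] (Ack (s+1) h) ≤ Ack (s+2*κ+1+2) h :=
        key (by omega) (by omega) hh
      have hBh : F (Ack (s+1)) (κ+1) (Ack (s+1) h) (Ack (s+1) h) ≤ Ack (s+2*(κ+1)+1) h := by
        have e : s+2*(κ+1)+1 = s+2*κ+1+2 := by ring
        rw [e]; exact hb1.trans hkey
      have hh' : 1 ≤ F (Ack (s+1)) (κ+1) (Ack (s+1) h) (Ack (s+1) h) :=
        hAh.trans (F_le hA (κ+1) _ _)
      have iht := F_bound s hs (κ+1) t _ hh'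
      calc F (Ack (s+1)) (κ+2) (t+1) h
          = F (Ack (s+1)) (κ+2) t (F (Ack (s+1)) (κ+1) (Ack (s+1) h) (Ack (s+1) h)) := by
            simp [F]
        _ ≤ (Ack (s+2*(κ+1)+1))^[t] (F (Ack (s+1)) (κ+1) (Ack (s+1) h) (Ack (s+1) h)) := iht
        _ ≤ (Ack (s+2*(κ+1)+1))^[t] (Ack (s+2*(κ+1)+1) h) := (ack_mono _).iterate t hBh
        _ = (Ack (s+2*(κ+1)+1))^[t+1] h := (Function.iterate_succ_apply _ t h).symm
termination_by κ t _ _ => (κ, t)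

/-- Lemma `lem:zeta`: with `A = A_{s+1}` from the Ackermann-like hierarchy and
`Φ` the adversary potential recursion, `Φ(h; (1,κ)) ≤ A_{s+2κ−1}(h)`. -/
theorem phi_le_ack (s : ℕ) (hs : 1 ≤ s)
    (Φ : ℕ → List (ℕ × ℕ) → ℕ)
    (hbase : ∀ h, Φ h [] = h)
    (hzero : ∀ h κ S, Φ h ((0, κ) :: S) = Φ h S)
    (hone : ∀ h t S, Φ h ((t + 1, 1) :: S) = Φ (Ack (s + 1) h) ((t, 1) :: S))
    (hgen : ∀ h t κ S, 1 < κ →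
      Φ h ((t + 1, κ) :: S) =
        Φ (Ack (s + 1) h) ((Ack (s + 1) h, κ - 1) :: (t, κ) :: S)) :
    ∀ (κ h : ℕ), 1 ≤ κ → 1 ≤ h → Φ h [(1, κ)] ≤ Ack (s + 2 * κ - 1) h := by
  intro κ h hκ hh
  obtain ⟨κ', rfl⟩ : ∃ κ', κ = κ' + 1 := ⟨κ - 1, by omega⟩
  rw [phiF s Φ hzero hone hgen κ' 1 h [], hbase]
  have hb := F_bound s hs κ' 1 h hh
  rw [Function.iterate_one] at hb
  have e : s + 2 * (κ' + 1) - 1 = s + 2 * κ' + 1 := by omega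
  rw [e]
  exact hb
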